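/- Let T be a tree on n ≥ 5 vertices that is isomorphic to neither the path P_n nor the star S_n. Then Π1(T) > Π1(S_n) = (n−1)^2 and Π2(T) > Π2(P_n) = 4^{n−2}. -/

import Mathlib

open SimpleGraph Finset

/-- Degree of a vertex (as `Nat.card` of its neighbor set). -/
noncomputable def mdeg {V : Type*} (G : SimpleGraph V) (v : V) : ℕ :=
  Nat.card (G.neighborSet v)

/-- First multiplicative Zagreb index. -/
noncomputable def mZ1 {V : Type*} [Fintype V] (G : SimpleGraph V) : ℕ :=
  ∏ v : V, (mdeg G v) ^ 2

/-- Second multiplicative Zagreb index. -/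
noncomputable def mZ2 {V : Type*} [Fintype V] (G : SimpleGraph V) : ℕ :=
  ∏ v : V, (mdeg G v) ^ (mdeg G v)

/-- The star on `n` vertices, with center `0`. -/
def starGraphFin (n : ℕ) : SimpleGraph (Fin n) :=
  SimpleGraph.fromRel (fun u _ => u.val = 0)

lemma mdeg_eq_degree {V : Type*} [Fintype V] (G : SimpleGraph V) [DecidableRel G.Adj] (v : V) :
    mdeg G v = G.degree v := by
  rw [mdeg, degree, neighborFinset_def, Set.toFinset_card, Nat.card_eq_fintype_card]

lemma starGraph_adj {n : ℕ} {u v : Fin n} :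
    (starGraphFin n).Adj u v ↔ u ≠ v ∧ (u.val = 0 ∨ v.val = 0) := by
  simp [starGraphFin, fromRel_adj]

lemma mdeg_starGraph {n : ℕ} (hn : 1 ≤ n) (v : Fin n) :
    mdeg (starGraphFin n) v = if v.val = 0 then n - 1 else 1 := by
  classical
  rw [mdeg_eq_degree, degree]
  split_ifs with h
  · have : (starGraphFin n).neighborFinset v = univ.erase v := by
      ext u; simp [mem_neighborFinset, _root_.starGraph_adj, h, eq_comm, Ne, Fin.ext_iff]
    rw [this, card_erase_of_mem (mem_univ v), card_univ, Fintype.card_fin]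
  · have : (starGraphFin n).neighborFinset v = {⟨0, by omega⟩} := by
      ext u; simp [mem_neighborFinset, _root_.starGraph_adj, h, Fin.ext_iff]
      omega
    rw [this, card_singleton]

lemma mZ1_starGraph {n : ℕ} (hn : 1 ≤ n) : mZ1 (starGraphFin n) = (n - 1) ^ 2 := by
  classical
  rw [mZ1]
  rw [Finset.prod_eq_single (⟨0, by omega⟩ : Fin n)]
  · rw [mdeg_starGraph hn]; simp
  · intro b _ hb
    rw [mdeg_starGraph hn, if_neg (by simpa [Fin.ext_iff] using hb), one_pow]
  · simp

lemma mdeg_pathGraph {n : ℕ} (hn : 3 ≤ n) (v : Fin n) :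
    mdeg (pathGraph n) v = if v.val = 0 ∨ v.val = n - 1 then 1 else 2 := by
  classical
  rw [mdeg_eq_degree, degree]
  rcases Nat.lt_or_ge v.val 1 with h0 | h1
  · have : (pathGraph n).neighborFinset v = {⟨1, by omega⟩} := by
      ext u; simp only [mem_neighborFinset, pathGraph_adj, mem_singleton, Fin.ext_iff]
      omega
    rw [this, card_singleton, if_pos (Or.inl (by omega))]
  · rcases Nat.lt_or_ge v.val (n-1) with h2 | h3
    · have : (pathGraph n).neighborFinset v = {⟨v.val - 1, by omega⟩, ⟨v.val + 1, by omega⟩} := by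
        ext u; simp only [mem_neighborFinset, pathGraph_adj, mem_insert, mem_singleton, Fin.ext_iff]
        omega
      rw [this, card_insert_of_notMem (by simp only [mem_singleton, Fin.ext_iff]; omega), card_singleton,
        if_neg (by push_neg; omega)]
    · have hv : v.val = n - 1 := by omega
      have : (pathGraph n).neighborFinset v = {⟨n - 2, by omega⟩} := by
        ext u
        simp only [mem_neighborFinset, pathGraph_adj, mem_singleton, Fin.ext_iff]
        have := u.isLt
        omega
      rw [this, card_singleton, if_pos (Or.inr hv)]

lemma mZ2_pathGraph {n : ℕ} (hn : 3 ≤ n) : mZ2 (pathGraph n) = 4 ^ (n - 2) := by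
  classical
  rw [mZ2]
  have : ∀ v : Fin n, (mdeg (pathGraph n) v) ^ (mdeg (pathGraph n) v)
      = if v.val = 0 ∨ v.val = n - 1 then 1 else 4 := by
    intro v; rw [mdeg_pathGraph hn]; split_ifs <;> norm_num
  rw [Finset.prod_congr rfl fun v _ => this v, Finset.prod_ite, Finset.prod_const,
    Finset.prod_const, one_pow, one_mul]
  congr 1
  have hcard : (univ.filter (fun v : Fin n => v.val = 0 ∨ v.val = n - 1)).card = 2 := by
    have : (univ.filter (fun v : Fin n => v.val = 0 ∨ v.val = n - 1))
        = {⟨0, by omega⟩, ⟨n - 1, by omega⟩} := by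
      ext u; simp [Fin.ext_iff]
    rw [this, card_insert_of_notMem (by simp [Fin.ext_iff]; omega), card_singleton]
  have := Finset.card_filter_add_card_filter_not
    (s := (univ : Finset (Fin n))) (p := fun v : Fin n => v.val = 0 ∨ v.val = n - 1)
  simp only [card_univ, Fintype.card_fin] at this
  omega


lemma sum_le_prod_of_two_le {α : Type*} {A : Finset α} {f : α → ℕ}
    (hA : A.Nonempty) (hf : ∀ a ∈ A, 2 ≤ f a) : ∑ a ∈ A, f a ≤ ∏ a ∈ A, f a := by
  induction hA using Finset.Nonempty.cons_induction with
  | singleton a => simp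
  | cons a s ha hs ih =>
    rw [Finset.sum_cons, Finset.prod_cons]
    have h2 : 2 ≤ f a := hf a (Finset.mem_cons_self a s)
    have hP : 2 ≤ ∏ x ∈ s, f x := by
      obtain ⟨b, hb⟩ := hs
      calc 2 ≤ f b := hf b (Finset.mem_cons_of_mem hb)
      _ ≤ ∏ x ∈ s, f x := Finset.single_le_prod'
        (fun i hi => by have := hf i (Finset.mem_cons_of_mem hi); omega) hb
    have hS := ih (fun x hx => hf x (Finset.mem_cons_of_mem hx))
    nlinarith

lemma four_pow_le (d : ℕ) (h : 1 ≤ d) : 4 ^ (d - 1) ≤ d ^ d := by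
  rcases Nat.lt_or_ge d 4 with h4 | h4
  · interval_cases d <;> norm_num
  · calc 4 ^ (d - 1) ≤ d ^ (d - 1) := Nat.pow_le_pow_left h4 _
    _ ≤ d ^ d := Nat.pow_le_pow_right (by omega) (by omega)

lemma four_pow_lt (d : ℕ) (h : 3 ≤ d) : 4 ^ (d - 1) < d ^ d := by
  rcases Nat.lt_or_ge d 4 with h4 | h4
  · interval_cases d; norm_num
  · calc 4 ^ (d - 1) < 4 ^ d := Nat.pow_lt_pow_right (by norm_num) (by omega)
    _ ≤ d ^ d := Nat.pow_le_pow_left h4 _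

lemma degree_pos {V : Type*} [Fintype V] (G : SimpleGraph V) [DecidableRel G.Adj]
    (hc : G.Connected) (h2 : 2 ≤ Fintype.card V) (v : V) : 0 < G.degree v := by
  rw [G.degree_pos_iff_exists_adj]
  have : Nontrivial V := Fintype.one_lt_card_iff_nontrivial.mp h2
  obtain ⟨w, hw⟩ := exists_ne v
  obtain ⟨p⟩ := hc.preconnected v w
  cases p with
  | nil => exact absurd rfl hw.symm
  | cons h q => exact ⟨_, h⟩


lemma chain_closed {n : ℕ} (T : SimpleGraph (Fin n)) [DecidableRel T.Adj]
    (hdeg : ∀ v, T.degree v ≤ 2) (l : List (Fin n)) (hl : 0 < l.length)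
    (hnodup : l.Nodup) (hchain : List.Chain' T.Adj l)
    (hfirst : ∀ b, T.Adj (l.get ⟨0, hl⟩) b → b ∈ l)
    (hlastdeg : T.degree (l.get ⟨l.length - 1, by omega⟩) = 1) :
    ∀ a ∈ l, ∀ b, T.Adj a b → b ∈ l := by
  intro a ha b hab
  by_contra hbs
  obtain ⟨i, hi⟩ := List.mem_iff_get.mp ha
  have hia : l.get ⟨i.val, i.isLt⟩ = a := by rw [← hi]
  rcases Nat.eq_zero_or_pos i.val with h0 | hpos
  · refine hbs (hfirst b ?_)
    have : (⟨0, hl⟩ : Fin l.length) = ⟨i.val, i.isLt⟩ := Fin.ext h0.symm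
    rw [this, hia]
    exact hab
  · have hd1 : T.Adj (l.get ⟨i.val - 1, by omega⟩) (l.get ⟨i.val - 1 + 1, by omega⟩) :=
      List.isChain_iff_getElem.mp hchain (i.val - 1) (by omega)
    have hidx : (⟨i.val - 1 + 1, by omega⟩ : Fin l.length) = ⟨i.val, i.isLt⟩ :=
      Fin.ext (by simp; omega)
    rw [hidx, hia] at hd1
    have hbu1 : b ≠ l.get ⟨i.val - 1, by omega⟩ := fun h => hbs (h ▸ List.get_mem l _)
    rcases Nat.lt_or_ge i.val (l.length - 1) with hmid | hlast
    · have hd2 : T.Adj a (l.get ⟨i.val + 1, by omega⟩) := by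
        have h2 := List.isChain_iff_getElem.mp hchain i.val (by omega)
        have h2' : T.Adj (l.get ⟨i.val, i.isLt⟩) (l.get ⟨i.val + 1, by omega⟩) := h2
        rwa [hia] at h2'
      have hbu2 : b ≠ l.get ⟨i.val + 1, by omega⟩ := fun h => hbs (h ▸ List.get_mem l _)
      have hu12 : l.get ⟨i.val - 1, by omega⟩ ≠ l.get ⟨i.val + 1, by omega⟩ := by
        intro h
        have h' := (List.Nodup.get_inj_iff hnodup).mp h
        simp only [Fin.mk.injEq] at h'
        omega
      have hsub : ({l.get ⟨i.val - 1, by omega⟩, l.get ⟨i.val + 1, by omega⟩, b} : Finset (Fin n))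
          ⊆ T.neighborFinset a := by
        intro z hz
        simp only [mem_insert, mem_singleton] at hz
        rw [mem_neighborFinset]
        rcases hz with h | h | h
        · exact h ▸ hd1.symm
        · exact h ▸ hd2
        · exact h ▸ hab
      have hcard : ({l.get ⟨i.val - 1, by omega⟩, l.get ⟨i.val + 1, by omega⟩, b} : Finset (Fin n)).card = 3 := by
        rw [card_insert_of_notMem (by
            simp only [mem_insert, mem_singleton]
            exact not_or.mpr ⟨hu12, Ne.symm hbu1⟩),
          card_insert_of_notMem (by
            simp only [mem_singleton]; exact Ne.symm hbu2), card_singleton]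
      have hle := Finset.card_le_card hsub
      rw [hcard] at hle
      have hda := hdeg a
      rw [degree] at hda
      omega
    · have hil : (⟨l.length - 1, by omega⟩ : Fin l.length) = ⟨i.val, i.isLt⟩ :=
        Fin.ext (by simp; omega)
      rw [hil, hia] at hlastdeg
      have hsub : ({l.get ⟨i.val - 1, by omega⟩, b} : Finset (Fin n)) ⊆ T.neighborFinset a := by
        intro z hz
        simp only [mem_insert, mem_singleton] at hz
        rw [mem_neighborFinset]
        rcases hz with h | h
        · exact h ▸ hd1.symm
        · exact h ▸ hab
      have hcard : ({l.get ⟨i.val - 1, by omega⟩, b} : Finset (Fin n)).card = 2 := by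
        rw [card_insert_of_notMem (by
          simp only [mem_singleton]; exact Ne.symm hbu1), card_singleton]
      have hle := Finset.card_le_card hsub
      rw [hcard, ← degree, hlastdeg] at hle
      omega

lemma exists_hamPath {n : ℕ} (T : SimpleGraph (Fin n)) [DecidableRel T.Adj]
    (hc : T.Connected) (hdeg : ∀ v, T.degree v ≤ 2)
    (v₀ : Fin n) (hv₀ : T.degree v₀ = 1) :
    ∃ (x : Fin n) (p : T.Walk x v₀), p.IsPath ∧ p.length = n - 1 := by
  have hn : 1 ≤ n := v₀.pos
  suffices H : ∀ k, k ≤ n - 1 → ∃ (x : Fin n) (p : T.Walk x v₀), p.IsPath ∧ p.length = k from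
    H (n - 1) le_rfl
  intro k
  induction k with
  | zero => exact fun _ => ⟨v₀, Walk.nil, Walk.IsPath.nil, rfl⟩
  | succ k ih =>
    intro hk
    obtain ⟨x, p, hp, hl⟩ := ih (by omega)
    by_cases hex : ∃ c, T.Adj x c ∧ c ∉ p.support
    · obtain ⟨c, hadj, hcs⟩ := hex
      exact ⟨c, Walk.cons hadj.symm p, (Walk.cons_isPath_iff hadj.symm p).mpr ⟨hp, hcs⟩,
        by simp [hl]⟩
    · exfalso
      push_neg at hex
      have hl0 : 0 < p.support.length := by rw [Walk.length_support]; omega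
      have hget0 : p.support.get ⟨0, hl0⟩ = x := by
        have h1 : p.support.head p.support_ne_nil = x := p.head_support
        rw [List.head_eq_getElem_zero] at h1
        exact h1
      have hgetlast : p.support.get ⟨p.support.length - 1, by omega⟩ = v₀ := by
        have h1 : p.support.getLast p.support_ne_nil = v₀ := p.getLast_support
        rw [List.getLast_eq_getElem] at h1
        exact h1
      have hclosed : ∀ a ∈ p.support, ∀ b, T.Adj a b → b ∈ p.support := by
        refine chain_closed T hdeg p.support hl0 hp.support_nodup p.isChain_adj_support ?_ ?_
        · rw [hget0]; exact fun b h => hex b h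
        · rw [hgetlast]; exact hv₀
      have hy : ∃ y, y ∉ p.support := by
        by_contra h
        push_neg at h
        have hsub : (univ : Finset (Fin n)) ⊆ p.support.toFinset :=
          fun y _ => List.mem_toFinset.mpr (h y)
        have h1 := Finset.card_le_card hsub
        have h2 := p.support.toFinset_card_le
        rw [Walk.length_support] at h2
        simp only [card_univ, Fintype.card_fin] at h1
        omega
      obtain ⟨y, hy⟩ := hy
      obtain ⟨w⟩ := hc.preconnected x y
      have hprop : ∀ (a b : Fin n) (q : T.Walk a b), a ∈ p.support → b ∈ p.support := by
        intro a b q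
        induction q with
        | nil => exact id
        | @cons u v w2 h q2 ihq => exact fun ha => ihq (hclosed _ ha _ h)
      exact hy (hprop x y w p.start_mem_support)


lemma iso_pathGraph {n : ℕ} (T : SimpleGraph (Fin n)) [DecidableRel T.Adj] (hT : T.IsTree)
    {x v₀ : Fin n} (p : T.Walk x v₀) (hp : p.IsPath) (hlen : p.length = n - 1) :
    Nonempty (T ≃g pathGraph n) := by
  have hn : 1 ≤ n := x.pos
  have llen : p.support.length = n := by rw [Walk.length_support, hlen]; omega
  have hnodup : p.support.Nodup := hp.support_nodup
  have hchain := p.isChain_adj_support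
  set l := p.support with hldef
  have hlt : ∀ k : ℕ, k < n → k < l.length := fun k hk => by omega
  let g : Fin n → Fin n := fun i => l.get ⟨i.val, hlt i.val i.isLt⟩
  have hginj : Function.Injective g := by
    intro i j h
    have h2 := (List.Nodup.get_inj_iff hnodup).mp h
    simp only [Fin.mk.injEq] at h2
    exact Fin.ext h2
  have hgadj : ∀ k : ℕ, (hk : k + 1 < n) → T.Adj (l.get ⟨k, hlt k (Nat.lt_of_succ_lt hk)⟩)
      (l.get ⟨k + 1, hlt (k + 1) hk⟩) :=
    fun k hk => List.isChain_iff_getElem.mp hchain k (by omega)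
  -- edge counting
  let gg : ℕ → Sym2 (Fin n) := fun k =>
    if h : k + 1 < n then s(l.get ⟨k, hlt k (Nat.lt_of_succ_lt h)⟩, l.get ⟨k + 1, hlt (k + 1) h⟩)
    else s(x, x)
  have hggeq : ∀ k : ℕ, (h : k + 1 < n) →
      gg k = s(l.get ⟨k, hlt k (Nat.lt_of_succ_lt h)⟩, l.get ⟨k + 1, hlt (k + 1) h⟩) :=
    fun k h => dif_pos h
  have hE'sub : (range (n - 1)).image gg ⊆ T.edgeFinset := by
    intro e he
    obtain ⟨k, hk, rfl⟩ := mem_image.mp he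
    rw [mem_range] at hk
    rw [hggeq k (by omega), mem_edgeFinset, mem_edgeSet]
    exact hgadj k (by omega)
  have hE'card : ((range (n - 1)).image gg).card = n - 1 := by
    rw [Finset.card_image_of_injOn, card_range]
    intro a ha b hb hab
    rw [mem_coe, mem_range] at ha hb
    rw [hggeq a (by omega), hggeq b (by omega), Sym2.eq_iff] at hab
    rcases hab with ⟨h1, h2⟩ | ⟨h1, h2⟩ <;>
    · have e1 := (List.Nodup.get_inj_iff hnodup).mp h1
      have e2 := (List.Nodup.get_inj_iff hnodup).mp h2
      simp only [Fin.mk.injEq] at e1 e2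
      omega
  have hEeq : (range (n - 1)).image gg = T.edgeFinset := by
    apply Finset.eq_of_subset_of_card_le hE'sub
    have h3 := hT.card_edgeFinset
    rw [Fintype.card_fin] at h3
    rw [hE'card]
    omega
  have hadj2 : ∀ i j : Fin n, T.Adj (g i) (g j) → ((i : ℕ) + 1 = j.val ∨ (j : ℕ) + 1 = i.val) := by
    intro i j h
    have hmem : s(g i, g j) ∈ T.edgeFinset := by rwa [mem_edgeFinset, mem_edgeSet]
    rw [← hEeq] at hmem
    obtain ⟨k, hk, heq⟩ := mem_image.mp hmem
    rw [mem_range] at hk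
    rw [hggeq k (by omega), Sym2.eq_iff] at heq
    have hgk : l.get ⟨k, by omega⟩ = g ⟨k, by omega⟩ := rfl
    have hgk1 : l.get ⟨k + 1, by omega⟩ = g ⟨k + 1, by omega⟩ := rfl
    rcases heq with ⟨h1, h2⟩ | ⟨h1, h2⟩ <;>
    · rw [hgk] at h1
      rw [hgk1] at h2
      have e1 := hginj h1
      have e2 := hginj h2
      rw [Fin.ext_iff] at e1 e2
      simp only at e1 e2
      omega
  have hadj1 : ∀ i j : Fin n, ((i : ℕ) + 1 = j.val ∨ (j : ℕ) + 1 = i.val) → T.Adj (g i) (g j) := by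
    intro i j hij
    rcases hij with h | h
    · have := hgadj i.val (by omega)
      have hj : (⟨i.val + 1, by omega⟩ : Fin l.length) = ⟨j.val, hlt j.val j.isLt⟩ :=
        Fin.ext (by simpa using h)
      rwa [hj] at this
    · have := hgadj j.val (by omega)
      have hi : (⟨j.val + 1, by omega⟩ : Fin l.length) = ⟨i.val, hlt i.val i.isLt⟩ :=
        Fin.ext (by simpa using h)
      rw [hi] at this
      exact this.symm
  have hgbij : Function.Bijective g := Finite.injective_iff_bijective.mp hginj
  let e : Fin n ≃ Fin n := Equiv.ofBijective g hgbij
  have hge : ∀ a, g (e.symm a) = a := fun a => e.apply_symm_apply a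
  refine ⟨⟨e.symm, ?_⟩⟩
  intro a b
  rw [pathGraph_adj]
  constructor
  · intro h
    have := hadj1 (e.symm a) (e.symm b) h
    rwa [hge, hge] at this
  · intro h
    apply hadj2 (e.symm a) (e.symm b)
    rwa [hge, hge]


lemma iso_starGraph {n : ℕ} (hn : 3 ≤ n) (T : SimpleGraph (Fin n)) [DecidableRel T.Adj]
    (hT : T.IsTree) (hdeg1 : ∀ v, 1 ≤ T.degree v)
    (hone : ∀ v w, 2 ≤ T.degree v → 2 ≤ T.degree w → v = w) :
    Nonempty (T ≃g starGraphFin n) := by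
  have hE : T.edgeFinset.card = n - 1 := by
    have h := hT.card_edgeFinset
    rw [Fintype.card_fin] at h
    omega
  have hsum : ∑ v, T.degree v = 2 * (n - 1) := by
    rw [T.sum_degrees_eq_twice_card_edges, hE]
  have hex : ∃ c, 2 ≤ T.degree c := by
    by_contra h
    push_neg at h
    have h1 : ∀ v : Fin n, T.degree v = 1 := fun v => le_antisymm (by have := h v; omega) (hdeg1 v)
    rw [Finset.sum_congr rfl fun v _ => h1 v, Finset.sum_const, card_univ, Fintype.card_fin,
      smul_eq_mul, mul_one] at hsum
    omega
  obtain ⟨c, hc⟩ := hex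
  have hother : ∀ u, u ≠ c → T.degree u = 1 := by
    intro u hu
    rcases Nat.lt_or_ge (T.degree u) 2 with h | h
    · have := hdeg1 u; omega
    · exact absurd (hone u c h hc) hu
  have hdegc : T.degree c = n - 1 := by
    have hsplit : T.degree c + ∑ v ∈ univ.erase c, T.degree v = ∑ v, T.degree v :=
      by exact Finset.add_sum_erase _ (fun v => T.degree v) (mem_univ c)
    rw [Finset.sum_congr rfl (fun v hv => hother v (Finset.ne_of_mem_erase hv)),
      Finset.sum_const, card_erase_of_mem (mem_univ c), card_univ, Fintype.card_fin,
      smul_eq_mul, mul_one] at hsplit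
    omega
  have hnbr : T.neighborFinset c = univ.erase c := by
    apply Finset.eq_of_subset_of_card_le
    · intro u hu
      rw [mem_neighborFinset] at hu
      exact Finset.mem_erase.mpr ⟨hu.ne', mem_univ u⟩
    · rw [card_erase_of_mem (mem_univ c), card_univ, Fintype.card_fin, ← degree, hdegc]
  have hAdjc : ∀ u, u ≠ c → T.Adj c u := by
    intro u hu
    rw [← mem_neighborFinset, hnbr]
    exact Finset.mem_erase.mpr ⟨hu, mem_univ u⟩
  have hleaf : ∀ u, u ≠ c → ∀ w, T.Adj u w → w = c := by
    intro u hu w hw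
    have hnu : T.neighborFinset u = {c} := by
      symm
      apply Finset.eq_of_subset_of_card_le
      · intro z hz
        rw [mem_singleton] at hz
        rw [hz, mem_neighborFinset]
        exact (hAdjc u hu).symm
      · rw [← degree, hother u hu, card_singleton]
    have : w ∈ T.neighborFinset u := by rwa [mem_neighborFinset]
    rw [hnu, mem_singleton] at this
    exact this
  have hadj_iff : ∀ a b, T.Adj a b ↔ a ≠ b ∧ (a = c ∨ b = c) := by
    intro a b
    constructor
    · intro h
      refine ⟨h.ne, ?_⟩
      by_cases ha : a = c
      · exact Or.inl ha
      · exact Or.inr (hleaf a ha b h)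
    · rintro ⟨hne, h | h⟩
      · exact h ▸ hAdjc b (h ▸ hne).symm
      · exact (h ▸ hAdjc a (h ▸ hne)).symm
  let z : Fin n := ⟨0, by omega⟩
  let e : Fin n ≃ Fin n := Equiv.swap c z
  have hz : ∀ a, e a = z ↔ a = c := by
    intro a
    constructor
    · intro h
      have := e.injective (a₁ := a) (a₂ := c)
      apply this
      rw [h]
      exact (Equiv.swap_apply_left c z).symm
    · intro h; rw [h]; exact Equiv.swap_apply_left c z
  have hval : ∀ a : Fin n, (a.val = 0) ↔ a = z := by
    intro a; rw [Fin.ext_iff]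
  refine ⟨⟨e, ?_⟩⟩
  intro a b
  rw [_root_.starGraph_adj, hadj_iff a b, hval, hval, hz, hz, ne_eq, EmbeddingLike.apply_eq_iff_eq, ← ne_eq]


theorem stmt10 (n : ℕ) (hn : 5 ≤ n) (T : SimpleGraph (Fin n)) (hT : T.IsTree)
    (hP : IsEmpty (T ≃g SimpleGraph.pathGraph n)) (hS : IsEmpty (T ≃g starGraphFin n)) :
    (mZ1 (starGraphFin n) = (n - 1) ^ 2 ∧ (n - 1) ^ 2 < mZ1 T) ∧
      (mZ2 (SimpleGraph.pathGraph n) = 4 ^ (n - 2) ∧ 4 ^ (n - 2) < mZ2 T) := by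
  classical
  have hconn : T.Connected := hT.isConnected
  have hdeg1 : ∀ v, 1 ≤ T.degree v :=
    fun v => degree_pos T hconn (by rw [Fintype.card_fin]; omega) v
  have hE : T.edgeFinset.card = n - 1 := by
    have h := hT.card_edgeFinset
    rw [Fintype.card_fin] at h
    omega
  have hsum : ∑ v, T.degree v = 2 * (n - 1) := by
    rw [T.sum_degrees_eq_twice_card_edges, hE]
  -- Part 1 : mZ1
  have hone : ¬ (∀ v w, 2 ≤ T.degree v → 2 ≤ T.degree w → v = w) := by
    intro hone
    exact hS.false (iso_starGraph (by omega) T hT hdeg1 hone).some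
  push_neg at hone
  obtain ⟨v, w, hv, hw, hvw⟩ := hone
  set A : Finset (Fin n) := univ.filter (fun v => 2 ≤ T.degree v) with hAdef
  have hvA : v ∈ A := mem_filter.mpr ⟨mem_univ v, hv⟩
  have hwA : w ∈ A := mem_filter.mpr ⟨mem_univ w, hw⟩
  have hA2 : 2 ≤ A.card := by
    have : ({v, w} : Finset (Fin n)) ⊆ A := by
      intro z hz
      rcases mem_insert.mp hz with h | h
      · exact h ▸ hvA
      · exact (mem_singleton.mp h) ▸ hwA
    have hc := Finset.card_le_card this
    rwa [card_insert_of_notMem (by simpa using hvw), card_singleton] at hc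
  have hAcards : A.card + (univ.filter (fun v => ¬ 2 ≤ T.degree v)).card = n := by
    rw [Finset.card_filter_add_card_filter_not, card_univ, Fintype.card_fin]
  have hsplit : ∑ x ∈ A, T.degree x + ∑ x ∈ univ.filter (fun v => ¬ 2 ≤ T.degree v), T.degree x
      = ∑ v, T.degree v := Finset.sum_filter_add_sum_filter_not _ _ _
  have hsum1 : ∑ x ∈ univ.filter (fun v => ¬ 2 ≤ T.degree v), T.degree x
      = (univ.filter (fun v => ¬ 2 ≤ T.degree v)).card := by
    rw [Finset.sum_congr rfl (fun x hx => ?_), Finset.sum_const, smul_eq_mul, mul_one]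
    have h1 := hdeg1 x
    have h2 := (mem_filter.mp hx).2
    omega
  have hsumA : n ≤ ∑ x ∈ A, T.degree x := by omega
  have hprodA : ∑ x ∈ A, T.degree x ≤ ∏ x ∈ A, T.degree x :=
    sum_le_prod_of_two_le (Finset.card_pos.mp (by omega)) (fun a ha => (mem_filter.mp ha).2)
  have hprodone : ∏ x ∈ univ.filter (fun v => ¬ 2 ≤ T.degree v), T.degree x = 1 := by
    apply Finset.prod_eq_one
    intro x hx
    have h1 := hdeg1 x
    have h2 := (mem_filter.mp hx).2
    omega
  have hprodall : n ≤ ∏ v, T.degree v := by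
    have := Finset.prod_filter_mul_prod_filter_not (univ : Finset (Fin n)) (fun v => 2 ≤ T.degree v) (fun v => T.degree v)
    rw [hprodone, mul_one] at this
    rw [← this]
    exact le_trans hsumA hprodA
  have hmZ1 : (n - 1) ^ 2 < mZ1 T := by
    rw [mZ1, Finset.prod_congr rfl (fun x _ => by rw [mdeg_eq_degree]), Finset.prod_pow]
    calc (n - 1) ^ 2 < n ^ 2 := Nat.pow_lt_pow_left (by omega) (by omega)
    _ ≤ (∏ v, T.degree v) ^ 2 := Nat.pow_le_pow_left hprodall 2
  -- Part 2 : mZ2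
  have hbig : ∃ v, 3 ≤ T.degree v := by
    by_contra h
    push_neg at h
    have hdeg2 : ∀ v, T.degree v ≤ 2 := fun v => by have := h v; omega
    have hleaf : ∃ v, T.degree v = 1 := by
      by_contra h2
      push_neg at h2
      have hall : ∀ v, T.degree v = 2 := fun v => by
        have := hdeg1 v; have := hdeg2 v; have := h2 v; omega
      rw [Finset.sum_congr rfl (fun v _ => hall v), Finset.sum_const, card_univ,
        Fintype.card_fin, smul_eq_mul] at hsum
      omega
    obtain ⟨v₀, hv₀⟩ := hleaf
    obtain ⟨x, p, hp, hlen⟩ := exists_hamPath T hconn hdeg2 v₀ hv₀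
    exact hP.false (iso_pathGraph T hT p hp hlen).some
  obtain ⟨v₃, hv₃⟩ := hbig
  have hbase : ∏ v, (4:ℕ) ^ (T.degree v - 1) = 4 ^ (n - 2) := by
    rw [Finset.prod_pow_eq_pow_sum]
    congr 1
    have hthis : ∑ v, (T.degree v - 1) + ∑ _v : Fin n, 1 = ∑ v, T.degree v := by
      rw [← Finset.sum_add_distrib]
      exact Finset.sum_congr rfl fun v _ => by have := hdeg1 v; omega
    rw [Finset.sum_const, card_univ, Fintype.card_fin, smul_eq_mul, mul_one] at hthis
    omega
  have hmZ2 : 4 ^ (n - 2) < mZ2 T := by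
    rw [mZ2, Finset.prod_congr rfl (fun x _ => by rw [mdeg_eq_degree]), ← hbase]
    apply Finset.prod_lt_prod
    · intro i _; positivity
    · intro i _; exact four_pow_le _ (hdeg1 i)
    · exact ⟨v₃, mem_univ _, four_pow_lt _ hv₃⟩
  exact ⟨⟨mZ1_starGraph (by omega), hmZ1⟩, ⟨mZ2_pathGraph (by omega), hmZ2⟩⟩
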